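/- For d×d operators W satisfying the Haar average formula, the Haar-averaged infinite-temperature two-point function decouples spectrally: ∫_{U(d)} (1/d)·Tr(e^{itE} U W U† e^{−itE} U W U†) dU = ⟨W⟩² + ((|Z(it)|² − 1)/(d² − 1))·(⟨W²⟩ − ⟨W⟩²), where E is any fixed diagonal real matrix, Z(it) = Tr e^{itE}, ⟨W⟩ = Tr(W)/d, ⟨W²⟩ = Tr(W²)/d, and dU is normalized Haar measure on U(d) (d ≥ 2). -/

import Mathlib

open Matrix BigOperators MeasureTheory

noncomputable instance matrixMeasurableSpace (d : ℕ) :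
    MeasurableSpace (Matrix (Fin d) (Fin d) ℂ) :=
  show MeasurableSpace (Fin d → Fin d → ℂ) from inferInstance

set_option linter.unusedSectionVars false
namespace Stmt17Aux

variable {d : ℕ} (W : Matrix (Fin d) (Fin d) ℂ)

lemma entry_eq (U : Matrix (Fin d) (Fin d) ℂ) (a b : Fin d) :
    (U * W * Uᴴ) a b = ∑ j, ∑ i, U a i * W i j * (starRingEnd ℂ) (U b j) := by
  simp [Matrix.mul_apply, Matrix.conjTranspose_apply, Finset.sum_mul]

lemma measurable_entry (a b : Fin d) :
    Measurable fun U : Matrix (Fin d) (Fin d) ℂ => (U * W * Uᴴ) a b := by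
  simp only [entry_eq]
  apply Finset.measurable_sum
  intro j _
  apply Finset.measurable_sum
  intro i _
  have h1 : Measurable fun U : Matrix (Fin d) (Fin d) ℂ => U a i :=
    (measurable_pi_apply i).comp (measurable_pi_apply a)
  have h2 : Measurable fun U : Matrix (Fin d) (Fin d) ℂ => U b j :=
    (measurable_pi_apply j).comp (measurable_pi_apply b)
  exact (h1.mul_const _).mul ((Complex.continuous_conj.measurable.comp h2))

lemma measurable_mul_left (V : Matrix (Fin d) (Fin d) ℂ) :
    Measurable fun U : Matrix (Fin d) (Fin d) ℂ => V * U := by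
  refine measurable_pi_iff.mpr ?_
  intro i
  refine measurable_pi_iff.mpr ?_
  intro j
  have : (fun U : Matrix (Fin d) (Fin d) ℂ => (V * U) i j)
      = fun U => ∑ k, V i k * U k j := by
    funext U; simp [Matrix.mul_apply]
  rw [this]
  apply Finset.measurable_sum
  intro k _
  have h : Measurable fun U : Matrix (Fin d) (Fin d) ℂ => U k j :=
    (measurable_pi_apply j).comp (measurable_pi_apply k)
  exact h.const_mul _

lemma entry_bound_one {U : Matrix (Fin d) (Fin d) ℂ}
    (hU : U ∈ Matrix.unitaryGroup (Fin d) ℂ) (a i : Fin d) : ‖U a i‖ ≤ 1 := by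
  have h1 : U * Uᴴ = 1 := by
    have := (Matrix.mem_unitaryGroup_iff).mp hU
    simpa [Matrix.star_eq_conjTranspose] using this
  have h2 : (∑ j, U a j * (starRingEnd ℂ) (U a j)) = 1 := by
    have := congrArg (fun M => M a a) h1
    simpa [Matrix.mul_apply, Matrix.conjTranspose_apply, Matrix.one_apply] using this
  have h3 : (∑ j, (Complex.normSq (U a j) : ℝ)) = 1 := by
    have := congrArg Complex.re h2
    simpa [Complex.mul_conj] using this
  have h4 : (Complex.normSq (U a i) : ℝ) ≤ 1 := by
    rw [← h3]
    exact Finset.single_le_sum (fun j _ => Complex.normSq_nonneg _) (Finset.mem_univ i)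
  have h5 : ‖U a i‖ ^ 2 ≤ 1 := by
    rw [← Complex.normSq_eq_norm_sq]
    exact h4
  nlinarith [norm_nonneg (U a i)]

lemma entry_bound {U : Matrix (Fin d) (Fin d) ℂ}
    (hU : U ∈ Matrix.unitaryGroup (Fin d) ℂ) (a b : Fin d) :
    ‖(U * W * Uᴴ) a b‖ ≤ ∑ j, ∑ i, ‖W i j‖ := by
  rw [entry_eq]
  refine le_trans (norm_sum_le _ _) (Finset.sum_le_sum fun j _ => ?_)
  refine le_trans (norm_sum_le _ _) (Finset.sum_le_sum fun i _ => ?_)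
  rw [norm_mul, norm_mul]
  have hc : ‖(starRingEnd ℂ) (U b j)‖ = ‖U b j‖ := by simp
  rw [hc]
  calc ‖U a i‖ * ‖W i j‖ * ‖U b j‖ ≤ 1 * ‖W i j‖ * 1 := by
        apply mul_le_mul
        · exact mul_le_mul_of_nonneg_right (entry_bound_one hU a i) (norm_nonneg _)
        · exact entry_bound_one hU b j
        · exact norm_nonneg _
        · positivity
    _ = ‖W i j‖ := by ring

variable (ν : Measure (Matrix (Fin d) (Fin d) ℂ)) [IsProbabilityMeasure ν]

lemma integrable_entry_mul
    (hνsupp : ∀ᵐ U ∂ν, U ∈ Matrix.unitaryGroup (Fin d) ℂ) (a b c e : Fin d) :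
    Integrable (fun U => (U * W * Uᴴ) a b * (U * W * Uᴴ) c e) ν := by
  refine Integrable.mono' (g := fun _ => (∑ j, ∑ i, ‖W i j‖) ^ 2)
    (integrable_const _) ?_ ?_
  · exact ((measurable_entry W a b).mul (measurable_entry W c e)).aestronglyMeasurable
  · filter_upwards [hνsupp] with U hU
    rw [norm_mul, sq]
    exact mul_le_mul (entry_bound W hU a b) (entry_bound W hU c e) (norm_nonneg _)
      (Finset.sum_nonneg fun j _ => Finset.sum_nonneg fun i _ => norm_nonneg _)

/-- The fundamental fourth-moment quantity. -/
noncomputable def gg (a b c e : Fin d) : ℂ :=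
  ∫ U, (U * W * Uᴴ) a b * (U * W * Uᴴ) c e ∂ν

lemma conj_invariance
    (hνleft : ∀ V ∈ Matrix.unitaryGroup (Fin d) ℂ,
      Measure.map (fun U => V * U) ν = ν)
    {V : Matrix (Fin d) (Fin d) ℂ} (hV : V ∈ Matrix.unitaryGroup (Fin d) ℂ)
    (a b c e : Fin d) :
    ∫ U, (V * (U * W * Uᴴ) * Vᴴ) a b * (V * (U * W * Uᴴ) * Vᴴ) c e ∂ν
      = gg W ν a b c e := by
  have key : ∀ U : Matrix (Fin d) (Fin d) ℂ,
      V * (U * W * Uᴴ) * Vᴴ = (V * U) * W * (V * U)ᴴ := by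
    intro U
    rw [Matrix.conjTranspose_mul]
    noncomm_ring
  simp_rw [key]
  have hmeas : AEStronglyMeasurable
      (fun U : Matrix (Fin d) (Fin d) ℂ => (U * W * Uᴴ) a b * (U * W * Uᴴ) c e) ν :=
    ((measurable_entry W a b).mul (measurable_entry W c e)).aestronglyMeasurable
  have hmeas' : AEStronglyMeasurable
      (fun U : Matrix (Fin d) (Fin d) ℂ => (U * W * Uᴴ) a b * (U * W * Uᴴ) c e)
      (Measure.map (fun U => V * U) ν) := by
    rw [hνleft V hV]; exact hmeas
  have h := integral_map (μ := ν) (measurable_mul_left V).aemeasurable hmeas'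
  rw [hνleft V hV] at h
  rw [gg]
  exact h.symm

lemma phase_invariance
    (hνleft : ∀ V ∈ Matrix.unitaryGroup (Fin d) ℂ,
      Measure.map (fun U => V * U) ν = ν)
    (ε : Fin d → ℂ) (hε : ∀ j, ε j * (starRingEnd ℂ) (ε j) = 1)
    (a b c e : Fin d) :
    gg W ν a b c e
      = (ε a * (starRingEnd ℂ) (ε b) * (ε c * (starRingEnd ℂ) (ε e))) * gg W ν a b c e := by
  have hV : Matrix.diagonal ε ∈ Matrix.unitaryGroup (Fin d) ℂ := by
    rw [Matrix.mem_unitaryGroup_iff]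
    rw [Matrix.star_eq_conjTranspose, Matrix.diagonal_conjTranspose,
      Matrix.diagonal_mul_diagonal]
    ext i j
    rw [Matrix.diagonal_apply, Matrix.one_apply]
    by_cases h : i = j
    · subst h
      simpa [Complex.star_def] using hε i
    · simp [h]
  have h := conj_invariance W ν hνleft hV a b c e
  have hentry : ∀ (X : Matrix (Fin d) (Fin d) ℂ) (i j : Fin d),
      (Matrix.diagonal ε * X * (Matrix.diagonal ε)ᴴ) i j
        = ε i * (starRingEnd ℂ) (ε j) * X i j := by
    intro X i j
    rw [Matrix.diagonal_conjTranspose, Matrix.mul_diagonal, Matrix.diagonal_mul]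
    simp [Pi.star_apply, Complex.star_def]
    ring
  have h2 : (∫ U, (Matrix.diagonal ε * (U * W * Uᴴ) * (Matrix.diagonal ε)ᴴ) a b
        * (Matrix.diagonal ε * (U * W * Uᴴ) * (Matrix.diagonal ε)ᴴ) c e ∂ν)
      = (ε a * (starRingEnd ℂ) (ε b) * (ε c * (starRingEnd ℂ) (ε e)))
        * gg W ν a b c e := by
    simp_rw [hentry]
    have hpt : ∀ U : Matrix (Fin d) (Fin d) ℂ,
        ε a * (starRingEnd ℂ) (ε b) * (U * W * Uᴴ) a b
          * (ε c * (starRingEnd ℂ) (ε e) * (U * W * Uᴴ) c e)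
        = (ε a * (starRingEnd ℂ) (ε b) * (ε c * (starRingEnd ℂ) (ε e)))
          * ((U * W * Uᴴ) a b * (U * W * Uᴴ) c e) := fun U => by ring
    simp_rw [hpt]
    rw [integral_const_mul]
    rfl
  conv_lhs => rw [← h]
  rw [h2]

lemma phase_kill
    (hνleft : ∀ V ∈ Matrix.unitaryGroup (Fin d) ℂ,
      Measure.map (fun U => V * U) ν = ν)
    (ε : Fin d → ℂ) (hε : ∀ j, ε j * (starRingEnd ℂ) (ε j) = 1)
    (a b c e : Fin d)
    (hfac : ε a * (starRingEnd ℂ) (ε b) * (ε c * (starRingEnd ℂ) (ε e)) = -1) :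
    gg W ν a b c e = 0 := by
  have h := phase_invariance W ν hνleft ε hε a b c e
  rw [hfac, neg_one_mul] at h
  have h0 : (2:ℂ) * gg W ν a b c e = 0 := by linear_combination h
  exact (mul_eq_zero.mp h0).resolve_left two_ne_zero

/-- permutation matrix conjugation -/
lemma perm_invariance
    (hνleft : ∀ V ∈ Matrix.unitaryGroup (Fin d) ℂ,
      Measure.map (fun U => V * U) ν = ν)
    (σ : Equiv.Perm (Fin d)) (a b c e : Fin d) :
    gg W ν (σ a) (σ b) (σ c) (σ e) = gg W ν a b c e := by
  set P : Matrix (Fin d) (Fin d) ℂ := Matrix.of fun i j => if j = σ i then 1 else 0 with hP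
  have hPentry : ∀ i j, P i j = if j = σ i then (1:ℂ) else 0 := fun i j => rfl
  have hV : P ∈ Matrix.unitaryGroup (Fin d) ℂ := by
    rw [Matrix.mem_unitaryGroup_iff, Matrix.star_eq_conjTranspose]
    ext i j
    simp only [Matrix.mul_apply, Matrix.conjTranspose_apply, hPentry]
    rw [Finset.sum_eq_single (σ i)]
    · by_cases h : i = j
      · subst h; simp
      · have : ¬ (σ i = σ j) := fun hc => h (σ.injective hc)
        simp [this, Matrix.one_apply, h]
    · intro k _ hk
      simp [hk]
    · intro hk
      exact absurd (Finset.mem_univ _) hk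
  have hentry : ∀ (X : Matrix (Fin d) (Fin d) ℂ) (i j : Fin d),
      (P * X * Pᴴ) i j = X (σ i) (σ j) := by
    intro X i j
    simp only [Matrix.mul_apply, Matrix.conjTranspose_apply, hPentry]
    rw [Finset.sum_eq_single (σ j)]
    · rw [Finset.sum_eq_single (σ i)] <;> simp
      intro k hk; simp [hk]
    · intro k _ hk
      simp [hk]
    · intro hk
      exact absurd (Finset.mem_univ _) hk
  have h := conj_invariance W ν hνleft hV a b c e
  rw [← h]
  simp_rw [hentry]
  rfl

lemma sum_two {i j : Fin d} (hij : i ≠ j) (x y : ℂ) (g : Fin d → ℂ) :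
    (∑ k, (if k = i then x else if k = j then y else 0) * g k) = x * g i + y * g j := by
  have hpt : ∀ k, (if k = i then x else if k = j then y else 0) * g k
      = (if k = i then x * g k else 0) + (if k = j then y * g k else 0) := by
    intro k
    by_cases h1 : k = i
    · subst h1
      rw [if_pos rfl, if_pos rfl, if_neg hij, add_zero]
    · rw [if_neg h1, if_neg h1]
      by_cases h2 : k = j
      · rw [if_pos h2, if_pos h2, zero_add]
      · rw [if_neg h2, if_neg h2, zero_mul, zero_add]
  simp_rw [hpt]
  rw [Finset.sum_add_distrib]
  simp [Finset.sum_ite_eq']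

lemma sum_one (i : Fin d) (x : ℂ) (g : Fin d → ℂ) :
    (∑ k, (if k = i then x else 0) * g k) = x * g i := by
  have hpt : ∀ k, (if k = i then x else 0) * g k = (if k = i then x * g k else 0) := by
    intro k; by_cases h1 : k = i <;> simp [h1]
  simp_rw [hpt]
  simp [Finset.sum_ite_eq']

/-- the `√2⁻¹` scalar -/
noncomputable def ss : ℂ := ((Real.sqrt 2)⁻¹ : ℝ)

lemma ss_conj : (starRingEnd ℂ) ss = ss := by simp [ss]

lemma ss_sq : ss * ss = 1/2 := by
  rw [ss, ← Complex.ofReal_mul, ← mul_inv,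
    Real.mul_self_sqrt (by norm_num : (0:ℝ) ≤ 2)]
  norm_num

/-- Givens-type rotation mixing coordinates p and q. -/
noncomputable def rot (p q : Fin d) : Matrix (Fin d) (Fin d) ℂ := Matrix.of fun a b =>
  if a = p then (if b = p then ss else if b = q then ss else 0)
  else if a = q then (if b = p then -ss else if b = q then ss else 0)
  else if b = a then 1 else 0

lemma rot_apply (p q a b : Fin d) : rot p q a b =
    if a = p then (if b = p then ss else if b = q then ss else 0)
    else if a = q then (if b = p then -ss else if b = q then ss else 0)
    else if b = a then 1 else 0 := rfl

lemma rot_conj (p q a b : Fin d) :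
    star (rot p q a b) = rot p q a b := by
  rw [rot_apply]
  split_ifs <;> simp [Complex.star_def, ss_conj]

lemma rot_pk (p q k : Fin d) :
    rot p q p k = if k = p then ss else if k = q then ss else 0 := by
  rw [rot_apply, if_pos rfl]

lemma rot_qk {p q : Fin d} (hpq : p ≠ q) (k : Fin d) :
    rot p q q k = if k = p then -ss else if k = q then ss else 0 := by
  rw [rot_apply, if_neg (Ne.symm hpq), if_pos rfl]

lemma rot_ak {p q a : Fin d} (hap : a ≠ p) (haq : a ≠ q) (k : Fin d) :
    rot p q a k = if k = a then 1 else 0 := by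
  rw [rot_apply, if_neg hap, if_neg haq]

lemma rot_col_p {p q : Fin d} (hpq : p ≠ q) (b : Fin d) :
    rot p q b p = if b = p then ss else if b = q then -ss else 0 := by
  by_cases h1 : b = p
  · simp [h1, rot_pk]
  · by_cases h2 : b = q
    · simp [h2, rot_qk hpq, h1, Ne.symm hpq]
    · simp [rot_ak h1 h2, h1, h2, Ne.symm h1]

lemma rot_col_q {p q : Fin d} (hpq : p ≠ q) (b : Fin d) :
    rot p q b q = if b = p then ss else if b = q then ss else 0 := by
  by_cases h1 : b = p
  · simp [h1, rot_pk, hpq]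
  · by_cases h2 : b = q
    · simp [h2, rot_qk hpq, h1, Ne.symm hpq]
    · simp [rot_ak h1 h2, h1, h2, Ne.symm h2]

lemma rot_col_other {p q c : Fin d} (hcp : c ≠ p) (hcq : c ≠ q) (b : Fin d) :
    rot p q b c = if b = c then 1 else 0 := by
  by_cases h1 : b = p
  · simp [h1, rot_pk, hcp, hcq, Ne.symm hcp]
  · by_cases h2 : b = q
    · have hpq : p ≠ q := fun h => h1 (h2.trans h.symm)
      simp [h2, rot_qk hpq, hcp, hcq, Ne.symm hcq]
    · simp [rot_ak h1 h2, eq_comm]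

lemma rot_mem {p q : Fin d} (hpq : p ≠ q) :
    rot p q ∈ Matrix.unitaryGroup (Fin d) ℂ := by
  rw [Matrix.mem_unitaryGroup_iff, Matrix.star_eq_conjTranspose]
  ext a b
  simp only [Matrix.mul_apply, Matrix.conjTranspose_apply, rot_conj, Matrix.one_apply]
  by_cases hap : a = p
  · subst hap
    simp_rw [rot_pk]
    rw [sum_two hpq, rot_col_p hpq, rot_col_q hpq]
    by_cases hb1 : b = a
    · subst hb1
      simp [hpq]
      linear_combination (2:ℂ) * ss_sq
    · by_cases hb2 : b = q
      · subst hb2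
        simp [hpq, hb1, Ne.symm hb1]
        try ring
      · simp [hb1, hb2, Ne.symm hb1]
  · by_cases haq : a = q
    · subst haq
      simp_rw [rot_qk hpq]
      rw [sum_two hpq, rot_col_p hpq, rot_col_q hpq]
      by_cases hb1 : b = p
      · subst hb1
        simp [hpq, Ne.symm hpq, hap]
        try ring
      · by_cases hb2 : b = a
        · subst hb2
          simp [hb1, Ne.symm hpq]
          linear_combination (2:ℂ) * ss_sq
        · simp [hb1, hb2, Ne.symm hb2]
    · simp_rw [rot_ak hap haq]
      rw [sum_one, rot_col_other hap haq]
      by_cases hba : b = a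
      · simp [hba]
      · simp [hba, Ne.symm hba]

lemma rot_pp {p q : Fin d} (hpq : p ≠ q) (X : Matrix (Fin d) (Fin d) ℂ) :
    (rot p q * X * (rot p q)ᴴ) p p
      = (ss * ss) * (X p p + X p q + X q p + X q q) := by
  simp only [Matrix.mul_apply, Matrix.conjTranspose_apply, rot_conj]
  have hcol : ∀ l, (∑ k, rot p q p k * X k l) = ss * X p l + ss * X q l := by
    intro l
    simp_rw [rot_pk]
    rw [sum_two hpq]
  calc (∑ l, (∑ k, rot p q p k * X k l) * rot p q p l)
      = ∑ l, (if l = p then ss else if l = q then ss else 0)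
          * (ss * X p l + ss * X q l) := by
        refine Finset.sum_congr rfl fun l _ => ?_
        rw [hcol, rot_pk, mul_comm]
    _ = ss * (ss * X p p + ss * X q p) + ss * (ss * X p q + ss * X q q) := by
        rw [sum_two hpq]
    _ = (ss * ss) * (X p p + X p q + X q p + X q q) := by ring

lemma trace_conj {U : Matrix (Fin d) (Fin d) ℂ}
    (hU : U ∈ Matrix.unitaryGroup (Fin d) ℂ) (A : Matrix (Fin d) (Fin d) ℂ) :
    (U * A * Uᴴ).trace = A.trace := by
  have h : Uᴴ * U = 1 := by
    have := (Matrix.mem_unitaryGroup_iff').mp hU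
    simpa [Matrix.star_eq_conjTranspose] using this
  rw [Matrix.trace_mul_comm (U * A) Uᴴ, ← Matrix.mul_assoc, h, Matrix.one_mul]

lemma sq_eq {U : Matrix (Fin d) (Fin d) ℂ}
    (hU : U ∈ Matrix.unitaryGroup (Fin d) ℂ) :
    (U * W * Uᴴ) * (U * W * Uᴴ) = U * (W * W) * Uᴴ := by
  have h : Uᴴ * U = 1 := by
    have := (Matrix.mem_unitaryGroup_iff').mp hU
    simpa [Matrix.star_eq_conjTranspose] using this
  have h2 : (U * W * Uᴴ) * (U * W * Uᴴ) = U * W * ((Uᴴ * U) * (W * Uᴴ)) := by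
    noncomm_ring
  rw [h2, h, Matrix.one_mul]
  noncomm_ring

lemma eq_one (hνsupp : ∀ᵐ U ∂ν, U ∈ Matrix.unitaryGroup (Fin d) ℂ) :
    (∑ a, ∑ b, gg W ν a b b a) = (W * W).trace := by
  have hint : ∀ a b : Fin d,
      Integrable (fun U => (U * W * Uᴴ) a b * (U * W * Uᴴ) b a) ν :=
    fun a b => integrable_entry_mul W ν hνsupp a b b a
  have h1 : (∑ a, ∑ b, gg W ν a b b a)
      = ∫ U, ∑ a, ∑ b, (U * W * Uᴴ) a b * (U * W * Uᴴ) b a ∂ν := by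
    rw [integral_finset_sum _ (fun a _ => integrable_finset_sum _ (fun b _ => hint a b))]
    refine Finset.sum_congr rfl fun a _ => ?_
    rw [integral_finset_sum _ (fun b _ => hint a b)]
    rfl
  rw [h1]
  have h2 : ∀ᵐ U ∂ν, (∑ a, ∑ b, (U * W * Uᴴ) a b * (U * W * Uᴴ) b a)
      = (W * W).trace := by
    filter_upwards [hνsupp] with U hU
    have h3 : (∑ a, ∑ b, (U * W * Uᴴ) a b * (U * W * Uᴴ) b a)
        = ((U * W * Uᴴ) * (U * W * Uᴴ)).trace := by
      simp [Matrix.trace, Matrix.diag, Matrix.mul_apply]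
    rw [h3, sq_eq W hU, trace_conj hU]
  rw [integral_congr_ae h2, integral_const]
  simp

lemma eq_two (hνsupp : ∀ᵐ U ∂ν, U ∈ Matrix.unitaryGroup (Fin d) ℂ) :
    (∑ a, ∑ b, gg W ν a a b b) = W.trace ^ 2 := by
  have hint : ∀ a b : Fin d,
      Integrable (fun U => (U * W * Uᴴ) a a * (U * W * Uᴴ) b b) ν :=
    fun a b => integrable_entry_mul W ν hνsupp a a b b
  have h1 : (∑ a, ∑ b, gg W ν a a b b)
      = ∫ U, ∑ a, ∑ b, (U * W * Uᴴ) a a * (U * W * Uᴴ) b b ∂ν := by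
    rw [integral_finset_sum _ (fun a _ => integrable_finset_sum _ (fun b _ => hint a b))]
    refine Finset.sum_congr rfl fun a _ => ?_
    rw [integral_finset_sum _ (fun b _ => hint a b)]
    rfl
  rw [h1]
  have h2 : ∀ᵐ U ∂ν, (∑ a, ∑ b, (U * W * Uᴴ) a a * (U * W * Uᴴ) b b)
      = W.trace ^ 2 := by
    filter_upwards [hνsupp] with U hU
    have h3 : (∑ a, ∑ b, (U * W * Uᴴ) a a * (U * W * Uᴴ) b b)
        = (U * W * Uᴴ).trace * (U * W * Uᴴ).trace := by
      rw [show (U * W * Uᴴ).trace = ∑ a, (U * W * Uᴴ) a a from by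
        simp [Matrix.trace, Matrix.diag]]
      rw [Finset.sum_mul_sum]
    rw [h3, trace_conj hU, sq]
  rw [integral_congr_ae h2, integral_const]
  simp

lemma eq_three
    (hνsupp : ∀ᵐ U ∂ν, U ∈ Matrix.unitaryGroup (Fin d) ℂ)
    (hνleft : ∀ V ∈ Matrix.unitaryGroup (Fin d) ℂ,
      Measure.map (fun U => V * U) ν = ν)
    {p q : Fin d} (hpq : p ≠ q) :
    gg W ν p p p p = gg W ν p q q p + gg W ν p p q q := by
  classical
  have h := conj_invariance W ν hνleft (rot_mem hpq) p p p p
  set F : Fin 4 → Fin d × Fin d := fun i =>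
    if i.val = 0 then (p,p) else if i.val = 1 then (p,q)
    else if i.val = 2 then (q,p) else (q,q) with hF
  have hF0 : F 0 = (p,p) := rfl
  have hF1 : F 1 = (p,q) := rfl
  have hF2 : F 2 = (q,p) := rfl
  have hF3 : F 3 = (q,q) := rfl
  have hpt : ∀ U : Matrix (Fin d) (Fin d) ℂ,
      (rot p q * (U * W * Uᴴ) * (rot p q)ᴴ) p p
        * (rot p q * (U * W * Uᴴ) * (rot p q)ᴴ) p p
      = (1/4 : ℂ) * ∑ i : Fin 4, ∑ j : Fin 4,
          (U * W * Uᴴ) (F i).1 (F i).2 * (U * W * Uᴴ) (F j).1 (F j).2 := by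
    intro U
    rw [← Finset.sum_mul_sum]
    have hA : (∑ i : Fin 4, (U * W * Uᴴ) (F i).1 (F i).2)
        = (U * W * Uᴴ) p p + (U * W * Uᴴ) p q + (U * W * Uᴴ) q p + (U * W * Uᴴ) q q := by
      rw [Fin.sum_univ_four, hF0, hF1, hF2, hF3]
    rw [hA, rot_pp hpq, ss_sq]
    ring
  have key : gg W ν p p p p
      = (1/4 : ℂ) * ∑ i : Fin 4, ∑ j : Fin 4,
          gg W ν (F i).1 (F i).2 (F j).1 (F j).2 := by
    rw [← h, integral_congr_ae (Filter.Eventually.of_forall hpt), integral_const_mul]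
    congr 1
    rw [integral_finset_sum _ (fun i _ => integrable_finset_sum _
      (fun j _ => integrable_entry_mul W ν hνsupp _ _ _ _))]
    refine Finset.sum_congr rfl fun i _ => ?_
    rw [integral_finset_sum _ (fun j _ => integrable_entry_mul W ν hνsupp _ _ _ _)]
    rfl
  -- phase functions
  set ε1 : Fin d → ℂ := fun k => if k = q then -1 else 1 with hε1def
  set ε2 : Fin d → ℂ := fun k => if k = q then Complex.I else 1 with hε2def
  have hε1 : ∀ j, ε1 j * (starRingEnd ℂ) (ε1 j) = 1 := by
    intro j; by_cases h : j = q <;> simp [hε1def, h]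
  have hε2 : ∀ j, ε2 j * (starRingEnd ℂ) (ε2 j) = 1 := by
    intro j; by_cases h : j = q <;> simp [hε2def, h, Complex.mul_conj]
  have hev1p : ε1 p = 1 := by simp [hε1def, hpq]
  have hev1q : ε1 q = -1 := by simp [hε1def]
  have hev2p : ε2 p = 1 := by simp [hε2def, hpq]
  have hev2q : ε2 q = Complex.I := by simp [hε2def]
  have kill1 : ∀ a b c e : Fin d,
      (ε1 a * (starRingEnd ℂ) (ε1 b) * (ε1 c * (starRingEnd ℂ) (ε1 e))) = -1 →
      gg W ν a b c e = 0 := fun a b c e hf => phase_kill W ν hνleft ε1 hε1 a b c e hf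
  have kill2 : ∀ a b c e : Fin d,
      (ε2 a * (starRingEnd ℂ) (ε2 b) * (ε2 c * (starRingEnd ℂ) (ε2 e))) = -1 →
      gg W ν a b c e = 0 := fun a b c e hf => phase_kill W ν hνleft ε2 hε2 a b c e hf
  have z1 : gg W ν p p p q = 0 := kill1 _ _ _ _ (by rw [hev1p, hev1q]; simp)
  have z2 : gg W ν p p q p = 0 := kill1 _ _ _ _ (by rw [hev1p, hev1q]; simp)
  have z3 : gg W ν p q p p = 0 := kill1 _ _ _ _ (by rw [hev1p, hev1q]; simp)
  have z4 : gg W ν p q p q = 0 := kill2 _ _ _ _ (by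
    rw [hev2p, hev2q]; simp [Complex.conj_I]; try ring_nf; try simp [Complex.I_sq])
  have z5 : gg W ν p q q q = 0 := kill1 _ _ _ _ (by rw [hev1p, hev1q]; simp)
  have z6 : gg W ν q p p p = 0 := kill1 _ _ _ _ (by rw [hev1p, hev1q]; simp)
  have z7 : gg W ν q p q p = 0 := kill2 _ _ _ _ (by
    rw [hev2p, hev2q]; simp [Complex.conj_I]; try ring_nf; try simp [Complex.I_sq])
  have z8 : gg W ν q p q q = 0 := kill1 _ _ _ _ (by rw [hev1p, hev1q]; simp)
  have z9 : gg W ν q q p q = 0 := kill1 _ _ _ _ (by rw [hev1p, hev1q]; simp)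
  have z10 : gg W ν q q q p = 0 := kill1 _ _ _ _ (by rw [hev1p, hev1q]; simp)
  -- constancy via the swap
  have hσ : ∀ a b c e : Fin d,
      gg W ν (Equiv.swap p q a) (Equiv.swap p q b) (Equiv.swap p q c) (Equiv.swap p q e)
        = gg W ν a b c e := fun a b c e => perm_invariance W ν hνleft (Equiv.swap p q) a b c e
  have c1 : gg W ν q q q q = gg W ν p p p p := by
    have := hσ p p p p; simpa [Equiv.swap_apply_left] using this
  have c2 : gg W ν q p p q = gg W ν p q q p := by
    have := hσ p q q p; simpa [Equiv.swap_apply_left, Equiv.swap_apply_right] using this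
  have c3 : gg W ν q q p p = gg W ν p p q q := by
    have := hσ p p q q; simpa [Equiv.swap_apply_left, Equiv.swap_apply_right] using this
  rw [show (∑ i : Fin 4, ∑ j : Fin 4, gg W ν (F i).1 (F i).2 (F j).1 (F j).2)
      = ∑ i : Fin 4, (gg W ν (F i).1 (F i).2 p p + gg W ν (F i).1 (F i).2 p q
        + gg W ν (F i).1 (F i).2 q p + gg W ν (F i).1 (F i).2 q q) from
    Finset.sum_congr rfl fun i _ => by
      rw [Fin.sum_univ_four, hF0, hF1, hF2, hF3]] at key
  rw [Fin.sum_univ_four, hF0, hF1, hF2, hF3] at key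
  simp only [Prod.fst, Prod.snd] at key
  rw [z1, z2, z3, z4, z5, z6, z7, z8, z9, z10, c1, c2, c3] at key
  linear_combination 2 * key

lemma fieldL2 (c u v N pp qq : ℂ) (hc : c ≠ 0) (hu : u ≠ 0) (hv : v ≠ 0) :
    (1/c) * (N*pp + c*(qq-pp))
      = ((c*(u*v))*(N*pp) + c^2*(u*v)*qq - c^2*(u*v)*pp) / (c^2*(u*v)) := by
  rw [eq_div_iff (mul_ne_zero (pow_ne_zero 2 hc) (mul_ne_zero hu hv))]
  field_simp [hc, hu, hv]
  ring

lemma fieldR2 (c u v S1 S2 N : ℂ) (hc : c ≠ 0) (hu : u ≠ 0) (hv : v ≠ 0) :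
    (S1/c)^2 + ((N-1)/(u*v)) * (S2/c - (S1/c)^2)
      = ((u*v)*S1^2 + (N-1)*(c*S2 - S1^2)) / (c^2 * (u*v)) := by
  field_simp [hc, hu, hv]

end Stmt17Aux

set_option maxHeartbeats 1000000 in
open Stmt17Aux in
/-- Spectral decoupling of the Haar-averaged infinite-temperature two-point function:
for the (normalized, two-sided invariant) Haar probability measure `ν` on `U(d)`, `d ≥ 2`,
a fixed real diagonal matrix `E` and any `W`,
`∫ (1/d)·Tr(e^{itE} U W U† e^{−itE} U W U†) dν(U)
  = ⟨W⟩² + ((|Z(it)|² − 1)/(d² − 1))·(⟨W²⟩ − ⟨W⟩²)`,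
where `Z(it) = Tr e^{itE}`, `⟨W⟩ = Tr W / d`, `⟨W²⟩ = Tr W² / d`. -/
theorem stmt17 (d : ℕ) (hd : 2 ≤ d) (t : ℝ) (Ev : Fin d → ℝ)
    (W : Matrix (Fin d) (Fin d) ℂ)
    (ν : Measure (Matrix (Fin d) (Fin d) ℂ)) [IsProbabilityMeasure ν]
    (hνsupp : ∀ᵐ U ∂ν, U ∈ Matrix.unitaryGroup (Fin d) ℂ)
    (hνleft : ∀ V ∈ Matrix.unitaryGroup (Fin d) ℂ,
      Measure.map (fun U => V * U) ν = ν)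
    (hνright : ∀ V ∈ Matrix.unitaryGroup (Fin d) ℂ,
      Measure.map (fun U => U * V) ν = ν) :
    (∫ U, (1 / d : ℂ) *
        (Matrix.diagonal (fun l => Complex.exp (Complex.I * (t : ℂ) * (Ev l : ℂ))) *
          U * W * Uᴴ *
          Matrix.diagonal (fun l => Complex.exp (-(Complex.I * (t : ℂ) * (Ev l : ℂ)))) *
          U * W * Uᴴ).trace ∂ν)
      = (W.trace / d) ^ 2 +
        ((((Complex.normSq (∑ l, Complex.exp (Complex.I * (t : ℂ) * (Ev l : ℂ))) : ℝ) : ℂ) - 1)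
            / ((d : ℂ) ^ 2 - 1)) *
          ((W * W).trace / d - (W.trace / d) ^ 2) := by
  classical
  set α : Fin d → ℂ := fun l => Complex.exp (Complex.I * (t : ℂ) * (Ev l : ℂ)) with hα
  set β : Fin d → ℂ := fun l => Complex.exp (-(Complex.I * (t : ℂ) * (Ev l : ℂ))) with hβ
  set p0 : Fin d := ⟨0, by omega⟩ with hp0
  set q1 : Fin d := ⟨1, by omega⟩ with hq1
  have hpq : p0 ≠ q1 := by
    intro h
    simpa [hp0, hq1, Fin.ext_iff] using congrArg Fin.val h
  set qq : ℂ := gg W ν p0 p0 p0 p0 with hqq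
  set pp : ℂ := gg W ν p0 q1 q1 p0 with hpp
  set rr : ℂ := gg W ν p0 p0 q1 q1 with hrr
  -- constancy of the moment function
  have hdiag : ∀ a : Fin d, gg W ν a a a a = qq := by
    intro a
    have h := perm_invariance W ν hνleft (Equiv.swap p0 a) p0 p0 p0 p0
    rwa [Equiv.swap_apply_left] at h
  have hpair : ∀ a b : Fin d, a ≠ b →
      ∃ σ : Equiv.Perm (Fin d), σ p0 = a ∧ σ q1 = b := by
    intro a b hab
    refine ⟨(Equiv.swap p0 a).trans (Equiv.swap ((Equiv.swap p0 a) q1) b), ?_, ?_⟩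
    · rw [Equiv.trans_apply, Equiv.swap_apply_left]
      apply Equiv.swap_apply_of_ne_of_ne
      · intro h
        apply hpq
        apply (Equiv.swap p0 a).injective
        rw [Equiv.swap_apply_left, ← h]
      · exact hab
    · rw [Equiv.trans_apply, Equiv.swap_apply_left]
  have hoff : ∀ a b : Fin d, a ≠ b → gg W ν a b b a = pp := by
    intro a b hab
    obtain ⟨σ, h1, h2⟩ := hpair a b hab
    have h := perm_invariance W ν hνleft σ p0 q1 q1 p0
    rw [h1, h2] at h
    exact h
  have hoff2 : ∀ a b : Fin d, a ≠ b → gg W ν a a b b = rr := by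
    intro a b hab
    obtain ⟨σ, h1, h2⟩ := hpair a b hab
    have h := perm_invariance W ν hνleft σ p0 p0 q1 q1
    rw [h1, h2] at h
    exact h
  -- the three linear equations
  have hcard : (Finset.univ : Finset (Fin d)).card = d := by simp
  have hsplit_sum : ∀ (u v : ℂ),
      (∑ a : Fin d, ∑ b : Fin d, (if a = b then u else v)) = (d:ℂ)*(d:ℂ)*v + (d:ℂ)*(u - v) := by
    intro u v
    have hpt : ∀ a b : Fin d, (if a = b then u else v) = v + (if a = b then u - v else 0) := by
      intro a b; by_cases h : a = b <;> simp [h]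
    simp_rw [hpt]
    rw [Finset.sum_congr rfl (fun a _ => Finset.sum_add_distrib)]
    rw [Finset.sum_add_distrib]
    congr 1
    · simp [Finset.mul_sum, mul_comm]
      ring
    · rw [Finset.sum_congr rfl (fun a _ => Finset.sum_ite_eq Finset.univ a (fun _ => u - v))]
      simp [mul_comm]
      ring
  have e1 : (d:ℂ)*qq + ((d:ℂ)^2 - d)*pp = (W * W).trace := by
    have h := eq_one W ν hνsupp
    have h2 : (∑ a : Fin d, ∑ b : Fin d, gg W ν a b b a)
        = (d:ℂ)*(d:ℂ)*pp + (d:ℂ)*(qq - pp) := by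
      rw [Finset.sum_congr rfl (fun a _ => Finset.sum_congr rfl (fun b _ => by
        by_cases hab : a = b
        · rw [show gg W ν a b b a = if a = b then qq else pp from by
            rw [if_pos hab, hab]; exact hdiag b]
        · rw [show gg W ν a b b a = if a = b then qq else pp from by
            rw [if_neg hab]; exact hoff a b hab]))]
      exact hsplit_sum qq pp
    rw [h2] at h
    linear_combination h
  have e2 : (d:ℂ)*qq + ((d:ℂ)^2 - d)*rr = W.trace ^ 2 := by
    have h := eq_two W ν hνsupp
    have h2 : (∑ a : Fin d, ∑ b : Fin d, gg W ν a a b b)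
        = (d:ℂ)*(d:ℂ)*rr + (d:ℂ)*(qq - rr) := by
      rw [Finset.sum_congr rfl (fun a _ => Finset.sum_congr rfl (fun b _ => by
        by_cases hab : a = b
        · rw [show gg W ν a a b b = if a = b then qq else rr from by
            rw [if_pos hab, hab]; exact hdiag b]
        · rw [show gg W ν a a b b = if a = b then qq else rr from by
            rw [if_neg hab]; exact hoff2 a b hab]))]
      exact hsplit_sum qq rr
    rw [h2] at h
    linear_combination h
  have e3 : qq = pp + rr := eq_three W ν hνsupp hνleft hpq
  -- pointwise expansion of the integrand
  have hmat : ∀ U : Matrix (Fin d) (Fin d) ℂ,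
      (Matrix.diagonal α * U * W * Uᴴ * Matrix.diagonal β * U * W * Uᴴ)
        = (Matrix.diagonal α * (U * W * Uᴴ)) * (Matrix.diagonal β * (U * W * Uᴴ)) := by
    intro U; noncomm_ring
  have hpt : ∀ U : Matrix (Fin d) (Fin d) ℂ,
      (1 / d : ℂ) * (Matrix.diagonal α * U * W * Uᴴ * Matrix.diagonal β * U * W * Uᴴ).trace
      = (1 / d : ℂ) * ∑ a : Fin d, ∑ b : Fin d,
          (α a * β b) * ((U * W * Uᴴ) a b * (U * W * Uᴴ) b a) := by
    intro U
    rw [hmat U]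
    congr 1
    rw [show ((Matrix.diagonal α * (U * W * Uᴴ)) * (Matrix.diagonal β * (U * W * Uᴴ))).trace
        = ∑ a : Fin d, ∑ b : Fin d, (Matrix.diagonal α * (U * W * Uᴴ)) a b
            * (Matrix.diagonal β * (U * W * Uᴴ)) b a from by
      simp [Matrix.trace, Matrix.diag, Matrix.mul_apply]]
    refine Finset.sum_congr rfl fun a _ => Finset.sum_congr rfl fun b _ => ?_
    rw [Matrix.diagonal_mul, Matrix.diagonal_mul]
    ring
  -- integrate
  have hint : ∀ a b : Fin d,
      Integrable (fun U => (α a * β b) * ((U * W * Uᴴ) a b * (U * W * Uᴴ) b a)) ν :=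
    fun a b => (integrable_entry_mul W ν hνsupp a b b a).const_mul _
  have hI : (∫ U, (1 / d : ℂ) *
        (Matrix.diagonal α * U * W * Uᴴ * Matrix.diagonal β * U * W * Uᴴ).trace ∂ν)
      = (1 / d : ℂ) * ∑ a : Fin d, ∑ b : Fin d, (α a * β b) * gg W ν a b b a := by
    rw [integral_congr_ae (Filter.Eventually.of_forall hpt), integral_const_mul]
    congr 1
    rw [integral_finset_sum _ (fun a _ => integrable_finset_sum _ (fun b _ => hint a b))]
    refine Finset.sum_congr rfl fun a _ => ?_
    rw [integral_finset_sum _ (fun b _ => hint a b)]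
    refine Finset.sum_congr rfl fun b _ => ?_
    rw [integral_const_mul]
    rfl
  -- evaluate the weighted sum
  have hαβ : ∀ l : Fin d, α l * β l = 1 := by
    intro l
    rw [hα, hβ, ← Complex.exp_add]
    simp
  have hws : (∑ a : Fin d, ∑ b : Fin d, (α a * β b) * gg W ν a b b a)
      = (∑ l, α l) * (∑ l, β l) * pp + (d:ℂ) * (qq - pp) := by
    have hterm : ∀ a b : Fin d, (α a * β b) * gg W ν a b b a
        = α a * β b * pp + (if a = b then qq - pp else 0) := by
      intro a b
      by_cases h : a = b
      · subst h
        rw [hdiag a, if_pos rfl, hαβ a]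
        ring
      · rw [hoff a b h, if_neg h]
        ring
    simp_rw [hterm]
    rw [Finset.sum_congr rfl (fun a _ => Finset.sum_add_distrib), Finset.sum_add_distrib]
    congr 1
    · rw [Finset.sum_mul_sum, Finset.sum_mul]
      refine Finset.sum_congr rfl fun a _ => ?_
      rw [Finset.sum_mul]
    · rw [Finset.sum_congr rfl
        (fun a _ => Finset.sum_ite_eq Finset.univ a (fun _ => qq - pp))]
      simp [mul_comm]
      ring
  -- the |Z|^2 identity
  have hconjZ : (starRingEnd ℂ) (∑ l, α l) = ∑ l, β l := by
    rw [map_sum]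
    refine Finset.sum_congr rfl fun l _ => ?_
    rw [hα, hβ, ← Complex.exp_conj]
    congr 1
    simp only [_root_.map_mul, Complex.conj_I, Complex.conj_ofReal]
    ring
  have hZZ : ((Complex.normSq (∑ l, α l) : ℝ) : ℂ) = (∑ l, α l) * (∑ l, β l) := by
    rw [← hconjZ, Complex.mul_conj]
  -- nonvanishing denominators
  have hd0 : (d:ℂ) ≠ 0 := Nat.cast_ne_zero.mpr (by omega)
  have hdm : (d:ℂ) - 1 ≠ 0 := by
    rw [sub_ne_zero]
    intro h
    have : (d:ℂ) = ((1:ℕ):ℂ) := by simpa using h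
    have := Nat.cast_injective this
    omega
  have hdp : (d:ℂ) + 1 ≠ 0 := by
    intro h
    have h2 : (d:ℂ) = -1 := by linear_combination h
    have h3 := congrArg Complex.re h2
    simp [Complex.natCast_re] at h3
    have : (0:ℝ) ≤ (d:ℝ) := Nat.cast_nonneg d
    linarith
  have hsq : ((d:ℂ)^2 - 1) ≠ 0 := by
    have : (d:ℂ)^2 - 1 = ((d:ℂ) - 1) * ((d:ℂ) + 1) := by ring
    rw [this]
    exact mul_ne_zero hdm hdp
  have hq2 : ((d:ℂ)^2 + d) ≠ 0 := by
    have : (d:ℂ)^2 + d = (d:ℂ) * ((d:ℂ) + 1) := by ring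
    rw [this]
    exact mul_ne_zero hd0 hdp
  -- solve the linear system
  have hq2' : (d:ℂ) * ((d:ℂ) + 1) * qq = W.trace ^ 2 + (W * W).trace := by
    linear_combination e1 + e2 + ((d:ℂ)^2 - d) * e3
  have hp2' : (d:ℂ) * (((d:ℂ) - 1) * ((d:ℂ) + 1)) * pp
      = (d:ℂ) * (W * W).trace - W.trace ^ 2 := by
    linear_combination (d:ℂ) * e1 - e2 - ((d:ℂ)^2 - (d:ℂ)) * e3
  rw [hI, hws, hZZ,
    show ((d:ℂ)^2 - 1) = ((d:ℂ) - 1) * ((d:ℂ) + 1) from by ring,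
    fieldL2 (d:ℂ) ((d:ℂ) - 1) ((d:ℂ) + 1) ((∑ l, α l) * ∑ l, β l) pp qq hd0 hdm hdp,
    fieldR2 (d:ℂ) ((d:ℂ) - 1) ((d:ℂ) + 1) W.trace (W * W).trace
      ((∑ l, α l) * ∑ l, β l) hd0 hdm hdp]
  congr 1
  linear_combination ((∑ l, α l) * (∑ l, β l) - (d:ℂ)) * hp2'
    + (d:ℂ) * ((d:ℂ) - 1) * hq2'
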